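/- Let T ∈ ℕ be even and positive. For every causal policy π in the two-link adversarial network model over horizon T, there exists a network-event sequence ω such that: (i) some feasible action sequence for ω has total utility Σ_{t=0}^{T−1}(a₁(t) + a₂(t)) = 2T and final queues Q₁(T) = Q₂(T) = 0, while every feasible action sequence for ω has total utility at most 2T; and (ii) letting (a^π, b^π, Q^π) be the actions and queues produced by π on ω, (2T − Σ_{t=0}^{T−1}(a₁^π(t) + a₂^π(t))) + Q₁^π(T) + Q₂^π(T) ≥ T/2. Consequently, under the throughput utility, either the utility regret of π or its total final queue length is at least T/4, i.e., Ω(T). -/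

import Mathlib

open Finset

/-- A network-event sequence in the two-link adversarial model: each slot `t` has
nonnegative arrival capacities `A i t` and channel rates `S i t` for links `i = 0, 1`. -/
structure EventSeq where
  A : Fin 2 → ℕ → ℝ
  S : Fin 2 → ℕ → ℝ
  hA : ∀ i t, 0 ≤ A i t
  hS : ∀ i t, 0 ≤ S i t

/-- An action sequence: admissions `a i t` and services `b i t` for each link and slot. -/
structure ActionSeq where
  a : Fin 2 → ℕ → ℝ
  b : Fin 2 → ℕ → ℝ

/-- Feasibility of an action sequence for an event sequence over horizon `T`:
admissions respect arrival capacities, services respect channel rates, and at most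
one link is served in each slot. -/
def Feasible (T : ℕ) (ω : EventSeq) (α : ActionSeq) : Prop :=
  ∀ t < T, (∀ i, 0 ≤ α.a i t ∧ α.a i t ≤ ω.A i t ∧ 0 ≤ α.b i t ∧ α.b i t ≤ ω.S i t) ∧
    (α.b 0 t = 0 ∨ α.b 1 t = 0)

/-- Queue lengths generated by an action sequence: `Q i 0 = 0` and
`Q i (t+1) = max (Q i t + a i t − b i t) 0`. -/
def queue (α : ActionSeq) (i : Fin 2) : ℕ → ℝ
  | 0 => 0
  | t + 1 => max (queue α i t + α.a i t - α.b i t) 0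

/-- A policy is causal if whenever two event sequences agree on slots `0, …, t`,
the assigned actions agree on slot `t`. -/
def Causal (π : EventSeq → ActionSeq) : Prop :=
  ∀ ω ω' : EventSeq, ∀ t : ℕ,
    (∀ s ≤ t, ∀ i, ω.A i s = ω'.A i s ∧ ω.S i s = ω'.S i s) →
    ∀ i, (π ω).a i t = (π ω').a i t ∧ (π ω).b i t = (π ω').b i t

/-! ### Auxiliary constructions -/

/-- The adversarial event sequence: in the first `H` slots both links have arrival
capacity `2` and rate `2`; afterwards arrivals stop, link `j`'s channel shuts down,
and the other link keeps rate `2`. -/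
def advEv (H : ℕ) (j : Fin 2) : EventSeq where
  A := fun _ t => if t < H then 2 else 0
  S := fun i t => if t < H then 2 else if i = j then 0 else 2
  hA := fun _ t => by split <;> norm_num
  hS := fun i t => by split_ifs <;> norm_num

/-- The oracle's actions: admit everything in the first half, serve link `j` at rate 2
in the first half (keeping it empty), drain the other link in the second half. -/
def oracleAct (H : ℕ) (j : Fin 2) : ActionSeq where
  a := fun _ t => if t < H then 2 else 0
  b := fun i t => if t < H then (if i = j then 2 else 0) else (if i = j then 0 else 2)

lemma queue_nonneg (α : ActionSeq) (i : Fin 2) : ∀ t, 0 ≤ queue α i t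
  | 0 => le_of_eq rfl
  | _ + 1 => le_max_right _ _

lemma sum_le_queue (α : ActionSeq) (i : Fin 2) :
    ∀ n, ∑ t ∈ Finset.range n, (α.a i t - α.b i t) ≤ queue α i n := by
  intro n
  induction n with
  | zero => simp [queue]
  | succ n ih =>
    rw [Finset.sum_range_succ, queue]
    have := le_max_left (queue α i n + α.a i n - α.b i n) 0
    linarith

lemma queue_congr (α α' : ActionSeq) (i : Fin 2) :
    ∀ t, (∀ s < t, α.a i s = α'.a i s ∧ α.b i s = α'.b i s) → queue α i t = queue α' i t := by
  intro t
  induction t with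
  | zero => intro _; rfl
  | succ t ih =>
    intro h
    have h1 := h t (Nat.lt_succ_self t)
    rw [queue, queue, ih (fun s hs => h s (hs.trans (Nat.lt_succ_self t))), h1.1, h1.2]

lemma oracle_queue_j (H : ℕ) (j : Fin 2) : ∀ t, queue (oracleAct H j) j t = 0 := by
  intro t
  induction t with
  | zero => rfl
  | succ t ih =>
    rw [queue, ih]
    simp only [oracleAct, if_pos rfl]
    split <;> norm_num

lemma oracle_queue_other1 (H : ℕ) (j i : Fin 2) (hij : i ≠ j) :
    ∀ t, t ≤ H → queue (oracleAct H j) i t = 2 * t := by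
  intro t
  induction t with
  | zero => intro _; simp [queue]
  | succ t ih =>
    intro ht
    have ht' : t < H := ht
    rw [queue, ih (le_of_lt ht')]
    simp only [oracleAct, if_pos ht', if_neg hij]
    rw [max_eq_left (by have := Nat.cast_nonneg (α := ℝ) t; linarith)]
    push_cast; ring

lemma oracle_queue_other2 (H : ℕ) (j i : Fin 2) (hij : i ≠ j) :
    ∀ s, s ≤ H → queue (oracleAct H j) i (H + s) = 2 * H - 2 * s := by
  intro s
  induction s with
  | zero => intro _; simpa using oracle_queue_other1 H j i hij H le_rfl
  | succ s ih =>
    intro hs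
    rw [← Nat.add_assoc, queue, ih (by omega)]
    have hnlt : ¬ (H + s < H) := by omega
    simp only [oracleAct, if_neg hnlt, if_neg hij]
    have hcast : (s : ℝ) + 1 ≤ H := by
      have : (s : ℝ) + 1 = ((s + 1 : ℕ) : ℝ) := by push_cast; ring
      rw [this]; exact_mod_cast hs
    rw [max_eq_left (by linarith)]
    push_cast; ring

lemma sum_ite_lt (H K : ℕ) (c : ℝ) :
    ∑ t ∈ Finset.range (H + K), (if t < H then c else 0) = H * c := by
  rw [Finset.sum_range_add]
  have h1 : ∑ i ∈ Finset.range H, (if i < H then c else 0) = H * c := by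
    rw [Finset.sum_congr rfl (fun i hi => if_pos (Finset.mem_range.mp hi)),
      Finset.sum_const, Finset.card_range, nsmul_eq_mul]
  have h2 : ∑ i ∈ Finset.range K, (if H + i < H then c else 0) = 0 :=
    Finset.sum_eq_zero (fun i _ => if_neg (by omega))
  rw [h1, h2, add_zero]

lemma oracle_feasible (H : ℕ) (j : Fin 2) : Feasible (H + H) (advEv H j) (oracleAct H j) := by
  intro t _
  constructor
  · intro i
    refine ⟨?_, ?_, ?_, ?_⟩ <;> simp only [oracleAct, advEv] <;> split_ifs <;> norm_num
  · have hj01 : j = 0 ∨ j = 1 := by omega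
    by_cases ht : t < H
    · rcases hj01 with rfl | rfl
      · right; simp [oracleAct, if_pos ht]
      · left; simp [oracleAct, if_pos ht]
    · rcases hj01 with rfl | rfl
      · left; simp [oracleAct, if_neg ht]
      · right; simp [oracleAct, if_neg ht]

lemma oracle_queue_final (H : ℕ) (j i : Fin 2) : queue (oracleAct H j) i (H + H) = 0 := by
  by_cases hij : i = j
  · subst hij; exact oracle_queue_j H i (H + H)
  · rw [oracle_queue_other2 H j i hij H le_rfl]; ring

/-- Theorem 1 (impossibility for an unconstrained adversary): for every causal policy
in the two-link adversarial model with throughput utility, there is an event sequence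
on which an oracle achieves total utility `2T` with empty final queues, yet the sum of
the policy's utility regret and final total queue length is at least `T/2`; hence the
regret or the total final queue length is at least `T/4 = Ω(T)`. -/
theorem impossibility_unconstrained (T : ℕ) (hT : 0 < T) (hTeven : Even T)
    (π : EventSeq → ActionSeq)
    (hfeas : ∀ ω, Feasible T ω (π ω)) (hcausal : Causal π) :
    ∃ ω : EventSeq,
      ((∃ α, Feasible T ω α ∧
          (∑ t ∈ Finset.range T, (α.a 0 t + α.a 1 t)) = 2 * (T : ℝ) ∧
          queue α 0 T = 0 ∧ queue α 1 T = 0) ∧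
        (∀ α, Feasible T ω α →
          (∑ t ∈ Finset.range T, (α.a 0 t + α.a 1 t)) ≤ 2 * (T : ℝ))) ∧
      ((2 * (T : ℝ) - ∑ t ∈ Finset.range T, ((π ω).a 0 t + (π ω).a 1 t))
          + queue (π ω) 0 T + queue (π ω) 1 T ≥ (T : ℝ) / 2) ∧
      ((2 * (T : ℝ) - ∑ t ∈ Finset.range T, ((π ω).a 0 t + (π ω).a 1 t)) ≥ (T : ℝ) / 4 ∨
        queue (π ω) 0 T + queue (π ω) 1 T ≥ (T : ℝ) / 4) := by
  obtain ⟨H, hH2⟩ := hTeven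
  have hH : 0 < H := by omega
  have hTR : (T : ℝ) = 2 * H := by rw [hH2]; push_cast; ring
  -- the policy's behaviour on the first half is independent of `j`; pick `j` to be
  -- the link with the larger queue at time `H`
  set p := π (advEv H 0) with hp
  obtain ⟨j, hjq⟩ : ∃ j : Fin 2, (queue p 0 H + queue p 1 H) / 2 ≤ queue p j H := by
    rcases le_total (queue p 1 H) (queue p 0 H) with h | h
    · exact ⟨0, by linarith⟩
    · exact ⟨1, by linarith⟩
  set ω := advEv H j with hω
  refine ⟨ω, ⟨⟨oracleAct H j, ?_, ?_, ?_, ?_⟩, ?_⟩, ?_⟩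
  · rw [hH2]; exact oracle_feasible H j
  · -- oracle total utility is 2T
    have : ∀ t ∈ Finset.range T, (oracleAct H j).a 0 t + (oracleAct H j).a 1 t
        = (if t < H then (4 : ℝ) else 0) := by
      intro t _
      simp only [oracleAct]
      split <;> norm_num
    rw [Finset.sum_congr rfl this, hH2, sum_ite_lt]
    push_cast; ring
  · rw [hH2]; exact oracle_queue_final H j 0
  · rw [hH2]; exact oracle_queue_final H j 1
  · -- every feasible action sequence has utility at most 2T
    intro α hα
    have hle : ∀ t ∈ Finset.range T, α.a 0 t + α.a 1 t ≤ (if t < H then (4 : ℝ) else 0) := by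
      intro t ht
      rw [Finset.mem_range] at ht
      obtain ⟨hbd, _⟩ := hα t ht
      obtain ⟨h00, h01, _, _⟩ := hbd 0
      obtain ⟨h10, h11, _, _⟩ := hbd 1
      have hA0 : ω.A 0 t = if t < H then (2:ℝ) else 0 := rfl
      have hA1 : ω.A 1 t = if t < H then (2:ℝ) else 0 := rfl
      rw [hA0] at h01; rw [hA1] at h11
      split_ifs at * <;> linarith
    calc ∑ t ∈ Finset.range T, (α.a 0 t + α.a 1 t)
        ≤ ∑ t ∈ Finset.range T, (if t < H then (4 : ℝ) else 0) := Finset.sum_le_sum hle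
      _ = 2 * (T : ℝ) := by rw [hH2, sum_ite_lt]; push_cast; ring
  · -- the policy's regret plus final queues is at least T/2, hence one is ≥ T/4
    -- first-half actions agree with those on `advEv H 0` by causality
    have hag : ∀ t < H, ∀ i, (π ω).a i t = p.a i t ∧ (π ω).b i t = p.b i t := by
      intro t ht i
      refine hcausal ω (advEv H 0) t (fun s hs i' => ?_) i
      have hsH : s < H := lt_of_le_of_lt hs ht
      constructor
      · rfl
      · show (if s < H then (2:ℝ) else _) = (if s < H then (2:ℝ) else _)
        rw [if_pos hsH, if_pos hsH]
    have hq : ∀ i, queue (π ω) i H = queue p i H := fun i =>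
      queue_congr _ _ i H (fun s hs => hag s hs i)
    -- second half: arrivals are zero, and link j can be neither fed nor served
    have hfw := hfeas ω
    have hzero : ∀ s, H ≤ s → s < T → (∀ i, (π ω).a i s = 0) ∧ (π ω).b j s = 0 := by
      intro s hs1 hs2
      obtain ⟨hbd, _⟩ := hfw s hs2
      have hnlt : ¬ (s < H) := by omega
      constructor
      · intro i
        obtain ⟨ha0, ha1, _, _⟩ := hbd i
        have hA : ω.A i s = 0 := if_neg hnlt
        rw [hA] at ha1
        linarith
      · obtain ⟨_, _, hb0, hb1⟩ := hbd j
        have hS : ω.S j s = 0 := by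
          show (if s < H then (2:ℝ) else if j = j then 0 else 2) = 0
          rw [if_neg hnlt, if_pos rfl]
        rw [hS] at hb1
        linarith
    -- total utility equals first-half utility
    set u := ∑ t ∈ Finset.range H, ((π ω).a 0 t + (π ω).a 1 t) with hu
    have hsum : ∑ t ∈ Finset.range T, ((π ω).a 0 t + (π ω).a 1 t) = u := by
      rw [hH2, Finset.sum_range_add]
      have : ∑ t ∈ Finset.range H, ((π ω).a 0 (H + t) + (π ω).a 1 (H + t)) = 0 :=
        Finset.sum_eq_zero (fun t ht => by
          have ht' := Finset.mem_range.mp ht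
          have h := (hzero (H + t) (by omega) (by rw [hH2]; omega)).1
          rw [h 0, h 1, add_zero])
      rw [this, add_zero]
    -- first-half utility is at most 4H
    have hu4 : u ≤ 4 * H := by
      have : ∀ t ∈ Finset.range H, (π ω).a 0 t + (π ω).a 1 t ≤ (4 : ℝ) := by
        intro t ht
        rw [Finset.mem_range] at ht
        obtain ⟨hbd, _⟩ := hfw t (by omega)
        obtain ⟨_, h01, _, _⟩ := hbd 0
        obtain ⟨_, h11, _, _⟩ := hbd 1
        have hA0 : ω.A 0 t = 2 := if_pos ht
        have hA1 : ω.A 1 t = 2 := if_pos ht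
        rw [hA0] at h01; rw [hA1] at h11
        linarith
      calc u ≤ ∑ _t ∈ Finset.range H, (4 : ℝ) := Finset.sum_le_sum this
        _ = 4 * H := by rw [Finset.sum_const, Finset.card_range, nsmul_eq_mul]; ring
    -- queues at time H are at least u - 2H in total
    have hb2 : ∑ t ∈ Finset.range H, ((π ω).b 0 t + (π ω).b 1 t) ≤ 2 * H := by
      have : ∀ t ∈ Finset.range H, (π ω).b 0 t + (π ω).b 1 t ≤ (2 : ℝ) := by
        intro t ht
        rw [Finset.mem_range] at ht
        obtain ⟨hbd, hd⟩ := hfw t (by omega)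
        obtain ⟨_, _, hb00, hb01⟩ := hbd 0
        obtain ⟨_, _, hb10, hb11⟩ := hbd 1
        have hS0 : ω.S 0 t ≤ 2 := by
          show (if t < H then (2:ℝ) else _) ≤ 2
          rw [if_pos ht]
        have hS1 : ω.S 1 t ≤ 2 := by
          show (if t < H then (2:ℝ) else _) ≤ 2
          rw [if_pos ht]
        rcases hd with h | h <;> rw [h] <;> linarith
      calc _ ≤ ∑ _t ∈ Finset.range H, (2 : ℝ) := Finset.sum_le_sum this
        _ = 2 * H := by rw [Finset.sum_const, Finset.card_range, nsmul_eq_mul]; ring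
    have hqsum : u - 2 * H ≤ queue (π ω) 0 H + queue (π ω) 1 H := by
      have h0 := sum_le_queue (π ω) 0 H
      have h1 := sum_le_queue (π ω) 1 H
      have e0 : ∑ t ∈ Finset.range H, ((π ω).a 0 t - (π ω).b 0 t)
          = ∑ t ∈ Finset.range H, (π ω).a 0 t - ∑ t ∈ Finset.range H, (π ω).b 0 t :=
        Finset.sum_sub_distrib _ _
      have e1 : ∑ t ∈ Finset.range H, ((π ω).a 1 t - (π ω).b 1 t)
          = ∑ t ∈ Finset.range H, (π ω).a 1 t - ∑ t ∈ Finset.range H, (π ω).b 1 t :=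
        Finset.sum_sub_distrib _ _
      have eu : u = ∑ t ∈ Finset.range H, (π ω).a 0 t + ∑ t ∈ Finset.range H, (π ω).a 1 t :=
        Finset.sum_add_distrib
      have eb : ∑ t ∈ Finset.range H, ((π ω).b 0 t + (π ω).b 1 t)
          = ∑ t ∈ Finset.range H, (π ω).b 0 t + ∑ t ∈ Finset.range H, (π ω).b 1 t :=
        Finset.sum_add_distrib
      rw [e0] at h0; rw [e1] at h1; rw [eb] at hb2
      linarith
    -- link j's queue is frozen during the second half
    have hfrozen : ∀ s ≤ H, queue (π ω) j (H + s) = queue (π ω) j H := by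
      intro s
      induction s with
      | zero => intro _; rfl
      | succ s ih =>
        intro hs
        have hz := hzero (H + s) (by omega) (by rw [hH2]; omega)
        rw [← Nat.add_assoc, queue, ih (by omega), (hz.1 j), hz.2, add_zero, sub_zero,
          max_eq_left (queue_nonneg _ _ _)]
    have hfinal : queue (π ω) j H ≤ queue (π ω) 0 T + queue (π ω) 1 T := by
      have hjT : queue (π ω) j T = queue (π ω) j H := by
        rw [hH2]; exact hfrozen H le_rfl
      have hn0 := queue_nonneg (π ω) 0 T
      have hn1 := queue_nonneg (π ω) 1 T
      have hj01 : j = 0 ∨ j = 1 := by omega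
      rcases hj01 with rfl | rfl <;> linarith
    -- combine everything
    have hkey : (2 * (T : ℝ) - ∑ t ∈ Finset.range T, ((π ω).a 0 t + (π ω).a 1 t))
        + queue (π ω) 0 T + queue (π ω) 1 T ≥ (T : ℝ) / 2 := by
      have hqj : (queue (π ω) 0 H + queue (π ω) 1 H) / 2 ≤ queue (π ω) j H := by
        rw [hq 0, hq 1, hq j]; exact hjq
      rw [hsum, hTR]
      linarith
    refine ⟨hkey, ?_⟩
    by_cases hc : (2 * (T : ℝ) - ∑ t ∈ Finset.range T, ((π ω).a 0 t + (π ω).a 1 t)) ≥ (T : ℝ) / 4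
    · exact Or.inl hc
    · right; linarith
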